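/- Let Q be a commutative ring with a ℤ-grading 𝒬 and let s ∈ Q be a homogeneous element. Let K = {x ∈ Q : sⁿ·x = 0 for some n ≥ 1} be the s-power-torsion ideal. Then: (a) K is a homogeneous ideal of Q; (b) the image of s in the quotient ring Q/K is a non-zero-divisor; and (c) for every commutative ring Q', precomposition with the quotient map Q → Q/K gives a bijection from the set of ring homomorphisms g : Q/K → Q' such that g(image of s) is a non-zero-divisor of Q', onto the set of ring homomorphisms f : Q → Q' such that f(s) is a non-zero-divisor of Q'. -/

import Mathlib

/-- The `s`-power-torsion ideal `K = {x : ∃ n ≥ 1, sⁿ·x = 0}` of a commutative ring. -/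
noncomputable def powerTorsionIdeal (Q : Type) [CommRing Q] (s : Q) : Ideal Q where
  carrier := { x : Q | ∃ n : ℕ, 1 ≤ n ∧ s ^ n * x = 0 }
  zero_mem' := ⟨1, le_refl 1, by simp⟩
  add_mem' := by
    rintro a b ⟨n, hn, ha⟩ ⟨m, hm, hb⟩
    refine ⟨n + m, le_trans hn (Nat.le_add_right n m), ?_⟩
    have h1 : s ^ (n + m) * a = 0 := by
      rw [pow_add, mul_comm (s ^ n), mul_assoc, ha, mul_zero]
    have h2 : s ^ (n + m) * b = 0 := by
      rw [pow_add, mul_assoc, hb, mul_zero]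
    rw [mul_add, h1, h2, add_zero]
  smul_mem' := by
    rintro c x ⟨n, hn, hx⟩
    exact ⟨n, hn, by rw [smul_eq_mul, mul_left_comm, hx, mul_zero]⟩

/-- for a ℤ-graded commutative ring `Q` and a homogeneous element `s`, with
`K` the `s`-power-torsion ideal: (a) `K` is homogeneous; (b) the image of `s` in `Q/K` is a
non-zero-divisor; (c) for every commutative ring `Q'`, precomposition with the quotient map
`Q → Q/K` is a bijection from the ring homomorphisms `Q/K → Q'` sending the image of `s` to a
non-zero-divisor onto the ring homomorphisms `Q → Q'` sending `s` to a non-zero-divisor. -/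
theorem powerTorsionIdeal_regularization
    (Q : Type) [CommRing Q] (𝒬 : ℤ → AddSubgroup Q) [GradedRing 𝒬]
    (s : Q) (hs : SetLike.IsHomogeneousElem 𝒬 s) :
    (powerTorsionIdeal Q s).IsHomogeneous 𝒬 ∧
    (Ideal.Quotient.mk (powerTorsionIdeal Q s) s
      ∈ nonZeroDivisors (Q ⧸ powerTorsionIdeal Q s)) ∧
    (∀ (Q' : Type) [CommRing Q'],
      Function.Bijective
        (fun g : { g : Q ⧸ powerTorsionIdeal Q s →+* Q' //
              g (Ideal.Quotient.mk (powerTorsionIdeal Q s) s) ∈ nonZeroDivisors Q' } =>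
          (⟨g.1.comp (Ideal.Quotient.mk (powerTorsionIdeal Q s)), g.2⟩ :
            { f : Q →+* Q' // f s ∈ nonZeroDivisors Q' }))) := by
  obtain ⟨d, hd⟩ := hs
  refine ⟨?_, ?_, ?_⟩
  · -- (a) homogeneous
    intro i x hx
    obtain ⟨n, hn, hsx⟩ := hx
    refine ⟨n, hn, ?_⟩
    have hpow : s ^ n ∈ 𝒬 (n • d) := SetLike.pow_mem_graded n hd
    have key : (DirectSum.decompose 𝒬 (s ^ n * x) (n • d + i) : Q)
        = s ^ n * (DirectSum.decompose 𝒬 x i : Q) :=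
      DirectSum.coe_decompose_mul_add_of_left_mem 𝒬 hpow
    rw [hsx] at key
    simpa using key.symm
  · -- (b) nonzerodivisor in quotient
    rw [mem_nonZeroDivisors_iff_right]
    intro y hy
    obtain ⟨x, rfl⟩ := Ideal.Quotient.mk_surjective y
    rw [← map_mul, Ideal.Quotient.eq_zero_iff_mem] at hy
    obtain ⟨n, hn, h⟩ := hy
    rw [Ideal.Quotient.eq_zero_iff_mem]
    exact ⟨n + 1, by omega, by rw [pow_succ, mul_assoc, mul_comm s x]; exact h⟩
  · -- (c) bijection
    intro Q' _
    constructor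
    · rintro ⟨g₁, hg₁⟩ ⟨g₂, hg₂⟩ h
      simp only [Subtype.mk.injEq] at h
      exact Subtype.ext (RingHom.ext fun y => by
        obtain ⟨x, rfl⟩ := Ideal.Quotient.mk_surjective y
        exact RingHom.congr_fun h x)
    · rintro ⟨f, hf⟩
      have hK : ∀ x ∈ powerTorsionIdeal Q s, f x = 0 := by
        rintro x ⟨n, hn, hx⟩
        have : f s ^ n * f x = 0 := by rw [← map_pow, ← map_mul, hx, map_zero]
        exact (mem_nonZeroDivisors_iff_right.1 (pow_mem hf n)) _ (by rwa [mul_comm])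
      refine ⟨⟨Ideal.Quotient.lift _ f hK, ?_⟩, ?_⟩
      · simpa using hf
      · exact Subtype.ext (RingHom.ext fun x => rfl)
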